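/- Every finite group generated by two subnormal supersoluble subgroups is soluble. -/

import Mathlib

/-- A subgroup `H` of `G` is subnormal if there is a chain
`H = c 0 ≤ c 1 ≤ ... ≤ c n = G` with each term normal in the next. -/
def Subgroup.IsSubnormal' {G : Type*} [Group G] (H : Subgroup G) : Prop :=
  ∃ (n : ℕ) (c : Fin (n + 1) → Subgroup G),
    c 0 = H ∧ c (Fin.last n) = ⊤ ∧
    ∀ i : Fin n, c i.castSucc ≤ c i.succ ∧
      ((c i.castSucc).subgroupOf (c i.succ)).Normal

/-- A group is supersoluble if it has a normal series (all terms normal in `G`)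
with cyclic factors; the factor `c (i+1) / c i` being cyclic is expressed as
`c (i+1)` being generated by `c i` together with a single element. -/
def IsSupersolvable (G : Type*) [Group G] : Prop :=
  ∃ (n : ℕ) (c : Fin (n + 1) → Subgroup G),
    c 0 = ⊥ ∧ c (Fin.last n) = ⊤ ∧
    (∀ i, (c i).Normal) ∧
    ∀ i : Fin n, c i.castSucc ≤ c i.succ ∧
      ∃ g ∈ c i.succ, c i.succ ≤ c i.castSucc ⊔ Subgroup.zpowers g

/-- The Fitting subgroup: the join of all normal nilpotent subgroups
(in a finite group, the largest normal nilpotent subgroup). -/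
def fittingSubgroup (G : Type*) [Group G] : Subgroup G :=
  sSup {N : Subgroup G | N.Normal ∧ Group.IsNilpotent N}

instance fittingSubgroup_normal (G : Type*) [Group G] : (fittingSubgroup G).Normal := by
  constructor
  intro x hx g
  rw [fittingSubgroup, sSup_eq_iSup'] at hx ⊢
  refine Subgroup.iSup_induction
    (C := fun y => g * y * g⁻¹ ∈
      ⨆ (N : {N : Subgroup G // N.Normal ∧ Group.IsNilpotent N}), (N : Subgroup G))
    _ hx (fun N y hy => ?_) (by simpa using Subgroup.one_mem _) (fun y z hy hz => ?_)
  · exact Subgroup.mem_iSup_of_mem N (N.2.1.conj_mem y hy g)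
  · simpa [mul_assoc] using Subgroup.mul_mem _ hy hz

/-- `O_p(G)`: the join of all normal `p`-subgroups
(in a finite group, the largest normal `p`-subgroup). -/
def pCore (p : ℕ) (G : Type*) [Group G] : Subgroup G :=
  sSup {N : Subgroup G | N.Normal ∧ IsPGroup p N}

instance pCore_normal (p : ℕ) (G : Type*) [Group G] : (pCore p G).Normal := by
  constructor
  intro x hx g
  rw [pCore, sSup_eq_iSup'] at hx ⊢
  refine Subgroup.iSup_induction
    (C := fun y => g * y * g⁻¹ ∈
      ⨆ (N : {N : Subgroup G // N.Normal ∧ IsPGroup p N}), (N : Subgroup G))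
    _ hx (fun N y hy => ?_) (by simpa using Subgroup.one_mem _) (fun y z hy hz => ?_)
  · exact Subgroup.mem_iSup_of_mem N (N.2.1.conj_mem y hy g)
  · simpa [mul_assoc] using Subgroup.mul_mem _ hy hz

/-- `G` has a Sylow tower of supersoluble type: a normal series `⊥ = c 0 ≤ ... ≤ c n = ⊤`
(all terms normal in `G`) together with strictly decreasing primes `p 0 > p 1 > ... `
exhausting the primes dividing `|G|`, such that each factor `c (i+1) / c i` is a
Sylow `p i`-subgroup of `G / c i` (i.e. has order the full `p i`-part of `|G|`). -/
def HasSupersolubleSylowTower (G : Type*) [Group G] : Prop :=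
  ∃ (n : ℕ) (c : Fin (n + 1) → Subgroup G) (p : Fin n → ℕ),
    c 0 = ⊥ ∧ c (Fin.last n) = ⊤ ∧
    (∀ i, (c i).Normal) ∧
    (∀ i : Fin n, c i.castSucc ≤ c i.succ) ∧
    (∀ i, (p i).Prime) ∧
    (∀ i j : Fin n, i < j → p j < p i) ∧
    (∀ q : ℕ, q.Prime → q ∣ Nat.card G → ∃ i, p i = q) ∧
    (∀ i : Fin n,
      Nat.card (c i.succ) = Nat.card (c i.castSucc) * p i ^ (Nat.card G).factorization (p i))

section AuxSolv

open Subgroup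

universe u

variable {G : Type*} [Group G]

lemma aux_solvable_of_normal_quotient (N : Subgroup G) [N.Normal]
    (h1 : IsSolvable N) (h2 : IsSolvable (G ⧸ N)) : IsSolvable G := by
  haveI : Group.IsSolvable N := h1; haveI : Group.IsSolvable (G ⧸ N) := h2
  exact solvable_of_ker_le_range N.subtype (QuotientGroup.mk' N)
    (by rw [QuotientGroup.ker_mk', Subgroup.range_subtype])

lemma aux_isSolvable_subgroupOf {N : Subgroup G} (K : Subgroup G) (h : IsSolvable N) :
    IsSolvable (N.subgroupOf K) := by
  haveI : Group.IsSolvable N := h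
  refine solvable_of_solvable_injective (G' := N)
    (f := { toFun := fun x => (⟨((x : K) : G), Subgroup.mem_subgroupOf.mp x.2⟩ : N),
            map_one' := rfl, map_mul' := fun _ _ => rfl }) ?_
  intro a b hab
  have h2 : ((a : K) : G) = ((b : K) : G) := congrArg (fun z : ↥N => (z : G)) hab
  exact Subtype.ext (Subtype.ext h2)

lemma aux_sup_solvable (H N : Subgroup G) [N.Normal] (hH : IsSolvable H) (hN : IsSolvable N) :
    IsSolvable ↥(H ⊔ N) := by
  haveI : Group.IsSolvable H := hH
  refine aux_solvable_of_normal_quotient (N.subgroupOf (H ⊔ N))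
    (aux_isSolvable_subgroupOf _ hN) ?_
  exact solvable_of_surjective (f := (QuotientGroup.quotientInfEquivProdNormalQuotient H N).toMonoidHom) (QuotientGroup.quotientInfEquivProdNormalQuotient H N).surjective

def solvRadical (G : Type*) [Group G] : Subgroup G :=
  sSup {N : Subgroup G | N.Normal ∧ IsSolvable N}

lemma aux_isSolvable_bot : IsSolvable (⊥ : Subgroup G) :=
  isSolvable_of_comm fun a b => Subsingleton.elim _ _

lemma solvRadical_mem [Finite G] :
    (solvRadical G).Normal ∧ IsSolvable (solvRadical G) := by
  set s : Set (Subgroup G) := {N : Subgroup G | N.Normal ∧ IsSolvable N} with hs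
  have hbot : (⊥ : Subgroup G) ∈ s := ⟨inferInstance, aux_isSolvable_bot⟩
  obtain ⟨M, hM, hmax⟩ : ∃ M ∈ s, ∀ a' ∈ s, id M ≤ id a' → id M = id a' := by
    obtain ⟨M, hM⟩ := (Set.toFinite s).exists_maximal ⟨⊥, hbot⟩
    exact ⟨M, hM.1, fun a ha hle => le_antisymm hle (hM.2 ha hle)⟩
  have hR : solvRadical G = M := by
    refine le_antisymm (sSup_le fun N hN => ?_) (le_sSup hM)
    haveI := hN.1; haveI := hM.1
    have hmem : N ⊔ M ∈ s := ⟨inferInstance, aux_sup_solvable N M hN.2 hM.2⟩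
    have heq : M = N ⊔ M := hmax _ hmem le_sup_right
    exact sup_eq_right.mp heq.symm
  rw [hR]; exact hM

instance solvRadical_characteristic : (solvRadical G).Characteristic := by
  rw [Subgroup.characteristic_iff_map_le]
  intro φ
  have h := (Subgroup.gc_map_comap (φ.toMonoidHom)).l_sSup
    (s := {N : Subgroup G | N.Normal ∧ IsSolvable N})
  rw [solvRadical, h]
  refine iSup_le fun N => iSup_le fun hN => le_sSup ?_
  haveI := hN.1; haveI : Group.IsSolvable N := hN.2
  refine ⟨hN.1.map _ φ.surjective, ?_⟩
  exact solvable_of_surjective (f := (N.equivMapOfInjective φ.toMonoidHom φ.injective).toMonoidHom) (N.equivMapOfInjective φ.toMonoidHom φ.injective).surjective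

end AuxSolv

section AuxSubnormal

open Subgroup

universe u

variable {G : Type*} [Group G]

lemma aux_normal_of_subgroupOf_top {H : Subgroup G}
    (h : (H.subgroupOf (⊤ : Subgroup G)).Normal) : H.Normal := by
  constructor
  intro x hx g
  have := h.conj_mem ⟨x, Subgroup.mem_top x⟩ (Subgroup.mem_subgroupOf.mpr hx)
    ⟨g, Subgroup.mem_top g⟩
  exact Subgroup.mem_subgroupOf.mp this

lemma aux_subgroupOf_subgroupOf_normal {H L K : Subgroup G} (hLK : L ≤ K)
    (hn : (H.subgroupOf L).Normal) :
    ((H.subgroupOf K).subgroupOf (L.subgroupOf K)).Normal := by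
  constructor
  intro x hx g
  have hxH : ((x : ↥K) : G) ∈ H := Subgroup.mem_subgroupOf.mp (Subgroup.mem_subgroupOf.mp hx)
  have hxL : ((x : ↥K) : G) ∈ L := Subgroup.mem_subgroupOf.mp x.2
  have hgL : ((g : ↥K) : G) ∈ L := Subgroup.mem_subgroupOf.mp g.2
  have := hn.conj_mem ⟨((x : ↥K) : G), hxL⟩ (Subgroup.mem_subgroupOf.mpr hxH)
    ⟨((g : ↥K) : G), hgL⟩
  have h2 : ((g : ↥K) : G) * ((x : ↥K) : G) * ((g : ↥K) : G)⁻¹ ∈ H :=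
    Subgroup.mem_subgroupOf.mp this
  exact Subgroup.mem_subgroupOf.mpr (Subgroup.mem_subgroupOf.mpr h2)

lemma aux_chain_mono {n : ℕ} (c : Fin (n + 1) → Subgroup G)
    (hc : ∀ i : Fin n, c i.castSucc ≤ c i.succ) :
    ∀ j k : Fin (n + 1), j ≤ k → c j ≤ c k := by
  have key : ∀ m : ℕ, ∀ hm : m < n + 1, ∀ j : Fin (n + 1), j ≤ ⟨m, hm⟩ → c j ≤ c ⟨m, hm⟩ := by
    intro m
    induction m with
    | zero =>
      intro hm j hj
      have : j = ⟨0, hm⟩ := le_antisymm hj (Fin.mk_le_mk.mpr (Nat.zero_le _))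
      rw [this]
    | succ m ihm =>
      intro hm j hj
      rcases eq_or_lt_of_le hj with h | h
      · rw [h]
      · have hm' : m < n + 1 := Nat.lt_of_succ_lt hm
        have hj' : j ≤ ⟨m, hm'⟩ := by
          have hv : j.1 < m + 1 := by simpa using Fin.lt_def.mp h
          exact Fin.le_def.mpr (by simpa using Nat.lt_succ_iff.mp hv)
        refine (ihm hm' j hj').trans ?_
        have hmn : m < n := by omega
        exact hc ⟨m, hmn⟩
  intro j k hjk
  have := key k.1 k.2 j (by simpa using hjk)
  simpa using this

lemma aux_le_radical : ∀ (n : ℕ) {G : Type u} [Group G] [Finite G] (A : Subgroup G)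
    (c : Fin (n + 1) → Subgroup G), c 0 = A → c (Fin.last n) = ⊤ →
    (∀ i : Fin n, c i.castSucc ≤ c i.succ ∧ ((c i.castSucc).subgroupOf (c i.succ)).Normal) →
    IsSolvable A → A ≤ solvRadical G := by
  intro n
  induction n with
  | zero =>
    intro G _ _ A c h0 hl _ hs
    have hA : A = ⊤ := by
      rw [← h0, show (0 : Fin 1) = Fin.last 0 from rfl, hl]
    refine le_sSup ⟨?_, hs⟩
    rw [hA]; infer_instance
  | succ n ih =>
    intro G _ _ A c h0 hl hc hs
    set K : Subgroup G := c ((Fin.last n).castSucc) with hK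
    have hKnorm' := (hc (Fin.last n)).2
    rw [Fin.succ_last, hl] at hKnorm'
    haveI hKN : K.Normal := aux_normal_of_subgroupOf_top hKnorm'
    have mono := aux_chain_mono c (fun i => (hc i).1)
    have hAK : A ≤ K := by
      rw [← h0]
      exact mono 0 _ (Fin.le_def.mpr (by simp))
    -- new chain in K
    set c' : Fin (n + 1) → Subgroup ↥K := fun j => (c j.castSucc).subgroupOf K with hc'def
    have hc'0 : c' 0 = A.subgroupOf K := by
      simp only [hc'def]
      rw [show Fin.castSucc (0 : Fin (n + 1)) = (0 : Fin (n + 2)) from rfl, h0]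
    have hc'l : c' (Fin.last n) = ⊤ := by
      simp only [hc'def, hK]
      exact Subgroup.subgroupOf_self _
    have hc' : ∀ i : Fin n, c' i.castSucc ≤ c' i.succ ∧
        ((c' i.castSucc).subgroupOf (c' i.succ)).Normal := by
      intro i
      have h1 := hc i.castSucc
      have hsc : (i.succ).castSucc = (i.castSucc).succ := (Fin.succ_castSucc i).symm
      have hle2 : c ((i.castSucc).succ) ≤ K := by
        refine mono _ _ ?_
        simp only [Fin.le_def, Fin.coe_castSucc, Fin.val_succ, Fin.val_last]
        exact i.isLt
      constructor
      · simp only [hc'def, hsc]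
        exact Subgroup.comap_mono h1.1
      · simp only [hc'def, hsc]
        exact aux_subgroupOf_subgroupOf_normal hle2 h1.2
    have hsub : A.subgroupOf K ≤ solvRadical ↥K :=
      ih (A.subgroupOf K) c' hc'0 hc'l hc' (aux_isSolvable_subgroupOf K hs)
    have hmap : Subgroup.map K.subtype (solvRadical ↥K) ≤ solvRadical G := by
      refine le_sSup ⟨inferInstance, ?_⟩
      haveI : Group.IsSolvable (solvRadical ↥K) := (solvRadical_mem (G := ↥K)).2
      exact solvable_of_surjective
        (f := ((solvRadical ↥K).equivMapOfInjective K.subtype K.subtype_injective).toMonoidHom)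
        ((solvRadical ↥K).equivMapOfInjective K.subtype K.subtype_injective).surjective
    refine le_trans ?_ hmap
    intro a ha
    exact ⟨⟨a, hAK ha⟩, hsub (Subgroup.mem_subgroupOf.mpr ha), rfl⟩

end AuxSubnormal

section AuxSuper

open Subgroup

lemma aux_isSolvable_of_isSupersolvable {G : Type*} [Group G] (h : IsSupersolvable G) :
    IsSolvable G := by
  obtain ⟨n, c, h0, hlast, hnorm, hstep⟩ := h
  have key : ∀ i, IsSolvable (c i) := by
    intro i
    induction i using Fin.induction with
    | zero => rw [h0]; exact aux_isSolvable_bot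
    | succ i ih =>
      obtain ⟨hle, g, hg, hgen⟩ := hstep i
      haveI : (c i.castSucc).Normal := hnorm _
      set N : Subgroup G := c i.castSucc with hN
      set N' : Subgroup (c i.succ) := N.subgroupOf (c i.succ) with hN'
      haveI : N'.Normal := inferInstance
      refine aux_solvable_of_normal_quotient N' (aux_isSolvable_subgroupOf _ ih) ?_
      refine isSolvable_of_comm ?_
      intro a b
      obtain ⟨x, rfl⟩ := QuotientGroup.mk'_surjective N' a
      obtain ⟨y, rfl⟩ := QuotientGroup.mk'_surjective N' b
      -- work in G ⧸ N
      set π : G →* G ⧸ N := QuotientGroup.mk' N with hπ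
      have hmem : ∀ z : (c i.succ), π (z : G) ∈ Subgroup.zpowers (π g) := by
        intro z
        have hz : (z : G) ∈ N ⊔ Subgroup.zpowers g := hgen z.2
        have : π (z : G) ∈ (N ⊔ Subgroup.zpowers g).map π := ⟨_, hz, rfl⟩
        rw [Subgroup.map_sup, MonoidHom.map_zpowers] at this
        have hmapN : N.map π = ⊥ := by
          rw [(Subgroup.map_eq_bot_iff _).2]
          rw [QuotientGroup.ker_mk']
        rw [hmapN, bot_sup_eq] at this
        exact this
      obtain ⟨m, hm⟩ := hmem x
      obtain ⟨k, hk⟩ := hmem y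
      have hcomm : π (x : G) * π (y : G) = π (y : G) * π (x : G) := by
        rw [← hm, ← hk, zpow_mul_comm]
      have hker : ((x * y)⁻¹ * (y * x) : (c i.succ)) ∈ N' := by
        rw [hN', Subgroup.mem_subgroupOf]
        have hval : ((((x * y)⁻¹ * (y * x) : (c i.succ))) : G)
            = ((x : G) * (y : G))⁻¹ * ((y : G) * (x : G)) := by push_cast; rfl
        rw [hval]
        have h1 : π (((x : G) * (y : G))⁻¹ * ((y : G) * (x : G))) = 1 := by
          rw [map_mul, map_inv, map_mul, map_mul, hcomm]; group
        exact (QuotientGroup.eq_one_iff _).mp h1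
      have heq : ((↑(x * y) : (c i.succ) ⧸ N')) = ↑(y * x) :=
        QuotientGroup.eq.mpr hker
      show (QuotientGroup.mk' N') x * (QuotientGroup.mk' N') y
          = (QuotientGroup.mk' N') y * (QuotientGroup.mk' N') x
      rw [← map_mul, ← map_mul]
      exact heq
  have := key (Fin.last n)
  rw [hlast] at this
  haveI : Group.IsSolvable (⊤ : Subgroup G) := this
  exact solvable_of_surjective (f := (Subgroup.topEquiv (G := G)).toMonoidHom)
    Subgroup.topEquiv.surjective

end AuxSuper


/-- Every finite group generated by two subnormal supersoluble subgroups is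
soluble. -/
theorem stmt_18 {G : Type*} [Group G] [Finite G] (A B : Subgroup G)
    (hA : A.IsSubnormal') (hB : B.IsSubnormal')
    (hAs : IsSupersolvable A) (hBs : IsSupersolvable B)
    (hgen : A ⊔ B = ⊤) :
    IsSolvable G := by
  obtain ⟨n, c, h0, hl, hc⟩ := hA
  obtain ⟨m, d, g0, gl, gc⟩ := hB
  have hAle := aux_le_radical n A c h0 hl hc (aux_isSolvable_of_isSupersolvable hAs)
  have hBle := aux_le_radical m B d g0 gl gc (aux_isSolvable_of_isSupersolvable hBs)
  have htop : solvRadical G = ⊤ := top_le_iff.mp (hgen ▸ sup_le hAle hBle)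
  have hsol := (solvRadical_mem (G := G)).2
  rw [htop] at hsol
  haveI : Group.IsSolvable (⊤ : Subgroup G) := hsol
  exact solvable_of_surjective (f := (Subgroup.topEquiv (G := G)).toMonoidHom)
    Subgroup.topEquiv.surjective
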